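/- For the focused cache model, if block a is accessed at least once in a sequence of accesses starting from any focused state, and afterwards fewer than k distinct other blocks are accessed, then the final focused state is not ε (i.e., a remains cached). Formally: for any list of accesses w = u ++ [a] ++ v with v containing no occurrence of a and fewer than k distinct blocks, the iterated focused update of any initial focused state along w is a set (not ε) of size at most the number of distinct blocks in v. -/

import Mathlib

/-- The focused cache update for focus block `a`. -/
def focusUpdate {M : Type*} [DecidableEq M] (k : ℕ) (a : M)
    (Q : Option (Finset M)) (b : M) : Option (Finset M) :=
  if b = a then some ∅
  else match Q with
    | none => none
    | some s => if (insert b s).card < k then some (insert b s) else none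

/-- Iterated focused update along a list of accesses, processed left to right. -/
def runFocus {M : Type*} [DecidableEq M] (k : ℕ) (a : M)
    (Q : Option (Finset M)) : List M → Option (Finset M)
  | [] => Q
  | b :: rest => runFocus k a (focusUpdate k a Q b) rest

lemma runFocus_append {M : Type*} [DecidableEq M] (k : ℕ) (a : M)
    (Q : Option (Finset M)) (l1 l2 : List M) :
    runFocus k a Q (l1 ++ l2) = runFocus k a (runFocus k a Q l1) l2 := by
  induction l1 generalizing Q with
  | nil => rfl
  | cons b rest ih => simp [runFocus, ih]

lemma runFocus_inv {M : Type*} [DecidableEq M] (k : ℕ) (a : M)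
    (T : Finset M) (hT : T.card < k) :
    ∀ (v : List M) (s : Finset M), s ⊆ T → v.toFinset ⊆ T → a ∉ v →
    ∃ s', runFocus k a (some s) v = some s' ∧ s' ⊆ T := by
  intro v
  induction v with
  | nil => exact fun s hs _ _ => ⟨s, rfl, hs⟩
  | cons b rest ih =>
    intro s hs hsub ha
    have hba : b ≠ a := fun h => ha (h ▸ @List.mem_cons_self _ b rest)
    have hbT : b ∈ T := hsub (by simp)
    have hins : insert b s ⊆ T := Finset.insert_subset hbT hs
    have hlt : (insert b s).card < k :=
      lt_of_le_of_lt (Finset.card_le_card hins) hT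
    have : focusUpdate k a (some s) b = some (insert b s) := by
      simp [focusUpdate, hba, hlt]
    rw [runFocus, this]
    exact ih (insert b s) hins (fun x hx => hsub (by simp [List.mem_toFinset] at hx ⊢; tauto))
      (fun h => ha (List.mem_cons_of_mem _ h))

/-- If `a` is accessed and afterwards fewer than `k` distinct other blocks are accessed,
then the focused state stays a set (i.e. `a` remains cached) of size at most the number
of distinct blocks accessed after `a`. -/
theorem runFocus_stays_cached {M : Type*} [DecidableEq M]
    (k : ℕ) (a : M) (Q0 : Option (Finset M)) (u v : List M)
    (hv : a ∉ v) (hcard : v.toFinset.card < k) :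
    ∃ s : Finset M, runFocus k a Q0 (u ++ [a] ++ v) = some s ∧
      s.card ≤ v.toFinset.card := by
  rw [runFocus_append, runFocus_append]
  have h1 : runFocus k a (runFocus k a Q0 u) [a] = some ∅ := by
    simp [runFocus, focusUpdate]
  rw [h1]
  obtain ⟨s', hrun, hsub⟩ := runFocus_inv k a v.toFinset hcard v ∅
    (Finset.empty_subset _) (Finset.Subset.refl _) hv
  exact ⟨s', hrun, Finset.card_le_card hsub⟩
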